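/- As N → ∞, the critical value λ_c(N) converges to 1/2, the critical value of the branching random walk on the whole line ℤ. -/

import Mathlib

open Matrix Polynomial Filter

/-- The (N+1)×(N+1) matrix A_N(λ): diagonal −1, entry (0,1) equal to 2λ,
entries λ on the other super/sub-diagonal positions, 0 elsewhere. -/
noncomputable def matA (lam : ℝ) (N : ℕ) : Matrix (Fin (N + 1)) (Fin (N + 1)) ℝ :=
  Matrix.of fun j k =>
    if j = k then -1
    else if (j : ℕ) = 0 ∧ (k : ℕ) = 1 then 2 * lam
    else if (j : ℕ) + 1 = (k : ℕ) ∨ (k : ℕ) + 1 = (j : ℕ) then lam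
    else 0

/-- The (N+1)×(N+1) matrix C_N: zero diagonal, entry (0,1) equal to 2,
entries 1 on the other super/sub-diagonal positions, 0 elsewhere;
so that A_N(λ) = −I + λ·C_N. -/
noncomputable def matC (N : ℕ) : Matrix (Fin (N + 1)) (Fin (N + 1)) ℝ :=
  Matrix.of fun j k =>
    if j = k then 0
    else if (j : ℕ) = 0 ∧ (k : ℕ) = 1 then 2
    else if (j : ℕ) + 1 = (k : ℕ) ∨ (k : ℕ) + 1 = (j : ℕ) then 1
    else 0

/-- The critical value λ_c(N) = inf {λ > 0 : det(−A_N(λ)) = 0}. -/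
noncomputable def lamCrit (N : ℕ) : ℝ :=
  sInf {lam : ℝ | 0 < lam ∧ (-(matA lam N)).det = 0}

/- ### Auxiliary lemmas -/

lemma matC_apply_eq (N : ℕ) (j k : Fin (N + 1)) :
    matC N j k = (if (k : ℕ) = (j : ℕ) + 1 then (if (j : ℕ) = 0 then 2 else 1) else 0)
      + (if (j : ℕ) = (k : ℕ) + 1 then 1 else 0) := by
  rcases j with ⟨j, hj⟩
  rcases k with ⟨k, hk⟩
  simp only [matC, of_apply, Fin.mk.injEq, Fin.val_mk]
  split_ifs <;> first | (exfalso; omega) | norm_num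

lemma sum_ite_val {N : ℕ} (m : ℕ) (f : Fin (N + 1) → ℝ) :
    ∑ k : Fin (N + 1), (if (k : ℕ) = m then f k else 0)
      = if h : m < N + 1 then f ⟨m, h⟩ else 0 := by
  split_ifs with h
  · rw [Finset.sum_eq_single (⟨m, h⟩ : Fin (N + 1))]
    · simp
    · intro k _ hk
      rw [if_neg]
      intro hkm; exact hk (Fin.ext hkm)
    · simp
  · apply Finset.sum_eq_zero
    intro k _
    rw [if_neg]
    omega

lemma mulVec_matC (N : ℕ) (v : Fin (N + 1) → ℝ) (j : Fin (N + 1)) :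
    (matC N).mulVec v j
      = (if h : (j : ℕ) + 1 < N + 1 then
            (if (j : ℕ) = 0 then 2 else 1) * v ⟨(j : ℕ) + 1, h⟩ else 0)
      + (if h : 1 ≤ (j : ℕ) then v ⟨(j : ℕ) - 1, by omega⟩ else 0) := by
  have hmv : (matC N).mulVec v j = ∑ k, matC N j k * v k := by
    simp [Matrix.mulVec, dotProduct]
  rw [hmv]
  have heq : ∀ k : Fin (N + 1), matC N j k * v k
      = (if (k : ℕ) = (j : ℕ) + 1 then (if (j : ℕ) = 0 then (2:ℝ) else 1) * v k else 0)
        + (if (k : ℕ) = (j : ℕ) - 1 ∧ 1 ≤ (j : ℕ) then v k else 0) := by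
    intro k
    rw [matC_apply_eq, add_mul]
    congr 1
    · split_ifs <;> ring
    · split_ifs <;> first | (exfalso; omega) | ring
  rw [Finset.sum_congr rfl (fun k _ => heq k), Finset.sum_add_distrib]
  congr 1
  · rw [sum_ite_val ((j : ℕ) + 1) (fun k => (if (j : ℕ) = 0 then (2:ℝ) else 1) * v k)]
  · by_cases hj : 1 ≤ (j : ℕ)
    · have hcongr : ∀ k : Fin (N + 1),
          (if (k : ℕ) = (j : ℕ) - 1 ∧ 1 ≤ (j : ℕ) then v k else 0)
          = (if (k : ℕ) = (j : ℕ) - 1 then v k else 0) := by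
        intro k; split_ifs <;> first | (exfalso; omega) | rfl | tauto
      rw [Finset.sum_congr rfl (fun k _ => hcongr k), sum_ite_val]
      rw [dif_pos (by omega : (j : ℕ) - 1 < N + 1), dif_pos hj]
    · rw [dif_neg hj]
      apply Finset.sum_eq_zero
      intro k _
      rw [if_neg]
      tauto

lemma neg_matA_eq (lam : ℝ) (N : ℕ) : -(matA lam N) = 1 - lam • matC N := by
  ext j k
  simp only [matA, matC, Matrix.neg_apply, Matrix.sub_apply, Matrix.one_apply,
    Matrix.smul_apply, of_apply, smul_eq_mul]
  split_ifs <;> ring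

/-- Every element of the critical set is at least 1/2. -/
lemma half_le_of_mem {N : ℕ} {lam : ℝ}
    (h : lam ∈ {lam : ℝ | 0 < lam ∧ (-(matA lam N)).det = 0}) : (1 / 2 : ℝ) ≤ lam := by
  obtain ⟨hpos, hdet⟩ := h
  by_contra hlt
  push_neg at hlt
  obtain ⟨v, hv0, hv⟩ := Matrix.exists_mulVec_eq_zero_iff.2 hdet
  rw [neg_matA_eq, Matrix.sub_mulVec, Matrix.one_mulVec, Matrix.smul_mulVec] at hv
  have hvj : ∀ j, v j = lam * (matC N).mulVec v j := by
    intro j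
    have := congrFun hv j
    simp only [Pi.sub_apply, Pi.smul_apply, Pi.zero_apply, smul_eq_mul] at this
    linarith
  obtain ⟨j0, _, hmax⟩ := Finset.exists_max_image Finset.univ (fun k => |v k|)
      ⟨0, Finset.mem_univ 0⟩
  set M := |v j0| with hM
  have habs : ∀ k, |v k| ≤ M := fun k => hmax k (Finset.mem_univ k)
  have hMpos : 0 < M := by
    rcases Function.ne_iff.1 hv0 with ⟨k, hk⟩
    exact lt_of_lt_of_le (abs_pos.2 hk) (habs k)
  have hbound : |(matC N).mulVec v j0| ≤ 2 * M := by
    rw [mulVec_matC]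
    by_cases h1 : (j0 : ℕ) + 1 < N + 1 <;> by_cases h2 : 1 ≤ (j0 : ℕ)
    · rw [dif_pos h1, dif_pos h2, if_neg (by omega)]
      refine (abs_add_le _ _).trans ?_
      rw [one_mul]
      have a1 : |v ⟨(j0 : ℕ) + 1, h1⟩| ≤ M := habs _
      have a2 : |v ⟨(j0 : ℕ) - 1, by omega⟩| ≤ M := habs _
      linarith
    · rw [dif_pos h1, dif_neg h2, if_pos (by omega), add_zero, abs_mul, abs_two]
      have a1 : |v ⟨(j0 : ℕ) + 1, h1⟩| ≤ M := habs _
      linarith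
    · rw [dif_neg h1, dif_pos h2, zero_add]
      have a2 : |v ⟨(j0 : ℕ) - 1, by omega⟩| ≤ M := habs _
      linarith
    · rw [dif_neg h1, dif_neg h2, add_zero, abs_zero]
      linarith
  have hfin : M ≤ lam * (2 * M) := by
    calc M = |v j0| := rfl
      _ = |lam * (matC N).mulVec v j0| := by rw [← hvj j0]
      _ = lam * |(matC N).mulVec v j0| := by rw [abs_mul, abs_of_pos hpos]
      _ ≤ lam * (2 * M) := mul_le_mul_of_nonneg_left hbound (le_of_lt hpos)
  nlinarith

/-- The eigenvector identity: C_N (cos(jθ))_j = 2cos(θ) (cos(jθ))_j for θ = π/(2(N+1)). -/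
lemma matC_eigen {N : ℕ} (hN : 1 ≤ N) :
    (matC N).mulVec (fun j : Fin (N + 1) => Real.cos ((j : ℕ) * (Real.pi / (2 * ((N : ℝ) + 1)))))
      = fun j : Fin (N + 1) => (2 * Real.cos (Real.pi / (2 * ((N : ℝ) + 1))))
          * Real.cos ((j : ℕ) * (Real.pi / (2 * ((N : ℝ) + 1)))) := by
  set θ : ℝ := Real.pi / (2 * ((N : ℝ) + 1)) with hθ
  have hNpos : (0 : ℝ) < (N : ℝ) + 1 := by positivity
  have hhalf : ((N : ℝ) + 1) * θ = Real.pi / 2 := by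
    rw [hθ]; field_simp
  funext j
  rw [mulVec_matC]
  rcases Nat.eq_zero_or_pos (j : ℕ) with hj0 | hjpos
  · -- row 0 : 2 cos θ = 2 cos θ · cos 0
    rw [dif_pos (by omega : (j : ℕ) + 1 < N + 1), dif_neg (by omega), if_pos hj0]
    simp only [Fin.val_mk, hj0]
    norm_num
  · by_cases hjN : (j : ℕ) + 1 < N + 1
    · -- middle rows: cos((j+1)θ) + cos((j-1)θ) = 2 cos θ cos(jθ)
      rw [dif_pos hjN, dif_pos (show 1 ≤ (j : ℕ) by omega), if_neg (by omega)]
      have hc1 : (((j : ℕ) + 1 : ℕ) : ℝ) = (j : ℕ) + 1 := by push_cast; ring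
      have hc2 : (((j : ℕ) - 1 : ℕ) : ℝ) = (j : ℕ) - 1 := by
        have : (1 : ℕ) ≤ (j : ℕ) := hjpos
        push_cast [Nat.cast_sub this]; ring
      simp only [Fin.val_mk]
      rw [hc1, hc2, show (((j : ℕ) : ℝ) + 1) * θ = ((j : ℕ) : ℝ) * θ + θ by ring,
        show (((j : ℕ) : ℝ) - 1) * θ = ((j : ℕ) : ℝ) * θ - θ by ring,
        Real.cos_add, Real.cos_sub]
      ring
    · -- last row: cos((N-1)θ) = 2 cos θ cos(Nθ), using cos((N+1)θ) = 0
      have hjN' : (j : ℕ) = N := by omega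
      rw [dif_neg hjN, dif_pos (show 1 ≤ (j : ℕ) by omega)]
      simp only [Fin.val_mk]
      have hc2 : (((j : ℕ) - 1 : ℕ) : ℝ) = (j : ℕ) - 1 := by
        have : (1 : ℕ) ≤ (j : ℕ) := hjpos
        push_cast [Nat.cast_sub this]; ring
      have h0 : Real.cos (((j : ℕ) : ℝ) * θ + θ) = 0 := by
        have : ((j : ℕ) : ℝ) * θ + θ = ((N : ℝ) + 1) * θ := by
          rw [show ((j : ℕ) : ℝ) = (N : ℝ) by exact_mod_cast congrArg Nat.cast hjN']
          ring
        rw [this, hhalf, Real.cos_pi_div_two]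
      rw [Real.cos_add] at h0
      rw [hc2, zero_add, show (((j : ℕ) : ℝ) - 1) * θ = ((j : ℕ) : ℝ) * θ - θ by ring,
        Real.cos_sub]
      linarith [h0]

/-- For N ≥ 1, λ_N = 1/(2cos(π/(2(N+1)))) lies in the critical set. -/
lemma lamN_mem {N : ℕ} (hN : 1 ≤ N) :
    (1 / (2 * Real.cos (Real.pi / (2 * ((N : ℝ) + 1))))) ∈
      {lam : ℝ | 0 < lam ∧ (-(matA lam N)).det = 0} := by
  set θ : ℝ := Real.pi / (2 * ((N : ℝ) + 1)) with hθ
  have hπ : 0 < Real.pi := Real.pi_pos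
  have hθpos : 0 < θ := by positivity
  have hθlt : θ < Real.pi / 2 := by
    rw [hθ, div_lt_div_iff₀ (by positivity) (by norm_num)]
    have h1 : (1 : ℝ) ≤ (N : ℝ) := by exact_mod_cast hN
    nlinarith
  have hcos : 0 < Real.cos θ := Real.cos_pos_of_mem_Ioo ⟨by linarith, hθlt⟩
  set lam : ℝ := 1 / (2 * Real.cos θ) with hlam
  have hlampos : 0 < lam := by positivity
  refine ⟨hlampos, ?_⟩
  rw [← Matrix.exists_mulVec_eq_zero_iff]
  refine ⟨fun j : Fin (N + 1) => Real.cos ((j : ℕ) * θ), ?_, ?_⟩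
  · intro h
    have h0 := congrFun h (⟨0, by omega⟩ : Fin (N + 1))
    simp at h0
  · rw [neg_matA_eq, Matrix.sub_mulVec, Matrix.one_mulVec, Matrix.smul_mulVec,
      matC_eigen hN]
    funext j
    simp only [Pi.sub_apply, Pi.smul_apply, Pi.zero_apply, smul_eq_mul]
    have hmul : lam * (2 * Real.cos θ) = 1 := by
      rw [hlam]; field_simp
    have : lam * (2 * Real.cos θ * Real.cos ((j : ℕ) * θ))
        = (lam * (2 * Real.cos θ)) * Real.cos ((j : ℕ) * θ) := by ring
    rw [this, hmul, one_mul, sub_self]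

/-- The critical value λ_c(N) converges to 1/2 as N → ∞. -/
theorem lamCrit_tendsto_half :
    Tendsto (fun N : ℕ => lamCrit N) atTop (nhds (1 / 2 : ℝ)) := by
  have hθ0 : Tendsto (fun N : ℕ => Real.pi / (2 * ((N : ℝ) + 1))) atTop (nhds 0) := by
    apply Tendsto.div_atTop tendsto_const_nhds
    apply Tendsto.const_mul_atTop (by norm_num : (0:ℝ) < 2)
    exact tendsto_atTop_add_const_right _ _ tendsto_natCast_atTop_atTop
  have hcos1 : Tendsto (fun N : ℕ => Real.cos (Real.pi / (2 * ((N : ℝ) + 1)))) atTop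
      (nhds 1) := by
    have := (Real.continuous_cos.tendsto 0).comp hθ0
    simpa [Function.comp_def] using this
  have hf : Tendsto (fun N : ℕ => 1 / (2 * Real.cos (Real.pi / (2 * ((N : ℝ) + 1)))))
      atTop (nhds (1 / 2 : ℝ)) := by
    have h2 : Tendsto (fun N : ℕ => 2 * Real.cos (Real.pi / (2 * ((N : ℝ) + 1)))) atTop
        (nhds 2) := by
      have := hcos1.const_mul (2 : ℝ)
      simpa using this
    have hd := Tendsto.div
      (tendsto_const_nhds : Tendsto (fun _ : ℕ => (1:ℝ)) atTop (nhds 1)) h2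
      (by norm_num)
    have heq : (fun N : ℕ => 1 / (2 * Real.cos (Real.pi / (2 * ((N : ℝ) + 1)))))
        = ((fun _ : ℕ => (1:ℝ)) / fun N : ℕ => 2 * Real.cos (Real.pi / (2 * ((N : ℝ) + 1)))) := by
      funext N; simp [Pi.div_apply]
    rw [heq, show (1 / 2 : ℝ) = 1 / 2 from rfl]
    convert hd using 2
  apply tendsto_of_tendsto_of_tendsto_of_le_of_le' tendsto_const_nhds hf
  · filter_upwards [eventually_ge_atTop 1] with N hN
    exact le_csInf ⟨_, lamN_mem hN⟩ (fun b hb => half_le_of_mem hb)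
  · filter_upwards [eventually_ge_atTop 1] with N hN
    exact csInf_le ⟨1 / 2, fun b hb => half_le_of_mem hb⟩ (lamN_mem hN)
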